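/- Let X be an infinite transitive subshift over a finite alphabet A. Then for every n ≥ 1, |Aut_{⌊(n−1)/2⌋}(X,σ)| ≤ (c_{1+c_n(X)}(X))^{2|A|(c_{n+1}(X) − c_n(X))}. -/

import Mathlib

open Filter Topology

/-- The left shift on bi-infinite sequences, as a bijection. -/
def shiftPerm (A : Type) : Equiv.Perm (ℤ → A) where
  toFun x n := x (n + 1)
  invFun x n := x (n - 1)
  left_inv x := funext fun n => by simp
  right_inv x := funext fun n => by simp

/-- A subshift: a closed, shift-invariant subset of the full shift. -/
def IsSubshift {A : Type} [TopologicalSpace A] (X : Set (ℤ → A)) : Prop :=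
  IsClosed X ∧ (shiftPerm A) '' X = X

/-- The word `w` occurs in some point of `X`. -/
def WordIn {A : Type} (X : Set (ℤ → A)) (w : List A) : Prop :=
  ∃ x ∈ X, ∃ i : ℤ, ∀ j : Fin w.length, x (i + ((j : ℕ) : ℤ)) = w.get j

/-- The language of `X`. -/
def language {A : Type} (X : Set (ℤ → A)) : Set (List A) :=
  {w | WordIn X w}

/-- The word complexity function `c_n(X)`: the number of `n`-letter words of `X`. -/
noncomputable def complexity {A : Type} (X : Set (ℤ → A)) (n : ℕ) : ℕ :=
  Nat.card {w : List A // w.length = n ∧ w ∈ language X}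

/-- Topological transitivity: some point has dense (two-sided) shift orbit. -/
def IsTransitive {A : Type} [TopologicalSpace A] (X : Set (ℤ → A)) : Prop :=
  ∃ x ∈ X, closure {y : ℤ → A | ∃ k : ℤ, (shiftPerm A ^ k) x = y} = X

/-- The shift restricted to a subshift, as a bijection of the subshift. -/
def shiftRestrict {A : Type} [TopologicalSpace A] {X : Set (ℤ → A)} (hX : IsSubshift X) :
    Equiv.Perm ↥X where
  toFun x := ⟨shiftPerm A x, by
    have h : shiftPerm A (x : ℤ → A) ∈ (shiftPerm A) '' X := ⟨x, x.2, rfl⟩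
    rwa [hX.2] at h⟩
  invFun x := ⟨(shiftPerm A).symm x, by
    have h : (x : ℤ → A) ∈ (shiftPerm A) '' X := by rw [hX.2]; exact x.2
    obtain ⟨y, hy, hyx⟩ := h
    have h2 : (shiftPerm A).symm (x : ℤ → A) = y := by rw [← hyx]; simp
    rwa [h2]⟩
  left_inv x := Subtype.ext (by simp)
  right_inv x := Subtype.ext (by simp)

/-- The automorphism group of a subshift: shift-commuting self-homeomorphisms of `X`. -/
def Aut {A : Type} [TopologicalSpace A] {X : Set (ℤ → A)} (hX : IsSubshift X) :
    Subgroup (Equiv.Perm ↥X) where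
  carrier := {φ : Equiv.Perm ↥X | Continuous ⇑φ ∧ Continuous ⇑(φ⁻¹) ∧
    ∀ x, φ (shiftRestrict hX x) = shiftRestrict hX (φ x)}
  one_mem' := ⟨continuous_id, continuous_id, fun _ => rfl⟩
  mul_mem' := by
    rintro a b ⟨ha1, ha2, ha3⟩ ⟨hb1, hb2, hb3⟩
    refine ⟨?_, ?_, fun x => ?_⟩
    · exact ha1.comp hb1
    · exact hb2.comp ha2
    · simp only [Equiv.Perm.mul_apply, hb3, ha3]
  inv_mem' := by
    rintro a ⟨ha1, ha2, ha3⟩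
    refine ⟨ha2, by simpa using ha1, fun x => ?_⟩
    apply a.injective
    rw [ha3]; simp

/-- `φ` is induced by the block map `Φ` with range `N`. -/
def InducedBy {A : Type} {X : Set (ℤ → A)} (φ : Equiv.Perm ↥X) (N : ℕ)
    (Φ : (Fin (2 * N + 1) → A) → A) : Prop :=
  ∀ (x : ↥X) (m : ℤ), (φ x : ℤ → A) m = Φ (fun j => (x : ℤ → A) (m - (N : ℤ) + ((j : ℕ) : ℤ)))

/-- `φ` has range `N`: it is induced by some block map on words of length `2N+1`. -/
def HasRange {A : Type} {X : Set (ℤ → A)} (φ : Equiv.Perm ↥X) (N : ℕ) : Prop :=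
  ∃ Φ : (Fin (2 * N + 1) → A) → A, InducedBy φ N Φ

section AuxWin
variable {A : Type}
def winW (x : ℤ → A) (k : ℤ) (m : ℕ) : List A := List.ofFn fun t : Fin m => x (k + ((t : ℕ) : ℤ))
lemma winW_length (x : ℤ → A) (k : ℤ) (m : ℕ) : (winW x k m).length = m := List.length_ofFn
lemma winW_eq_iff {x x' : ℤ → A} {k k' : ℤ} {m : ℕ} :
    winW x k m = winW x' k' m ↔ ∀ t : Fin m, x (k + ((t : ℕ) : ℤ)) = x' (k' + ((t : ℕ) : ℤ)) := by
  rw [winW, winW, List.ofFn_inj, funext_iff]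
lemma winW_mem_language {X : Set (ℤ → A)} {x : ℤ → A} (hx : x ∈ X) (k : ℤ) (m : ℕ) :
    winW x k m ∈ language X := by
  refine ⟨x, hx, k, fun j => ?_⟩
  rw [List.get_eq_getElem]
  simp [winW]
lemma winW_succ (x : ℤ → A) (k : ℤ) (m : ℕ) :
    winW x k (m + 1) = winW x k m ++ [x (k + (m : ℤ))] := by
  rw [winW, List.ofFn_succ']
  simp [winW, List.concat_eq_append]
lemma mem_language_iff_winW {X : Set (ℤ → A)} {w : List A} :
    w ∈ language X ↔ ∃ x ∈ X, ∃ i : ℤ, winW x i w.length = w := by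
  constructor
  · rintro ⟨x, hx, i, h⟩
    refine ⟨x, hx, i, ?_⟩
    apply List.ext_get (winW_length ..)
    intro t h1 h2
    have h3 : (winW x i w.length).get ⟨t, h1⟩ = x (i + (t : ℤ)) := by
      simp [winW, List.get_ofFn]
    rw [h3]
    exact h ⟨t, h2⟩
  · rintro ⟨x, hx, i, h⟩
    rw [← h]
    exact winW_mem_language hx _ _
end AuxWin

section AuxSpec
variable {A : Type}

/-- A word is right-special: it has two distinct one-letter right extensions in the language. -/
def SpecW (X : Set (ℤ → A)) (w : List A) : Prop :=
  ∃ a b : A, a ≠ b ∧ w ++ [a] ∈ language X ∧ w ++ [b] ∈ language X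

lemma ext_unique {X : Set (ℤ → A)} {w : List A} (hns : ¬ SpecW X w) {a b : A}
    (ha : w ++ [a] ∈ language X) (hb : w ++ [b] ∈ language X) : a = b := by
  by_contra h; exact hns ⟨a, b, h, ha, hb⟩

lemma finite_words [Finite A] (X : Set (ℤ → A)) (m : ℕ) :
    Finite {w : List A // w.length = m ∧ w ∈ language X} := by
  have hinj : Function.Injective (fun w : {w : List A // w.length = m ∧ w ∈ language X} =>
      (fun i : Fin m => w.1.get (Fin.cast w.2.1.symm i))) := by
    intro w w' h
    apply Subtype.ext
    apply List.ext_get (by rw [w.2.1, w'.2.1])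
    intro t h1 h2
    have := congrFun h ⟨t, by rw [← w.2.1]; exact h1⟩
    simpa using this
  exact Finite.of_injective _ hinj

/-- Master propagation lemma: if `x` agrees at two positions on `n+1` coordinates and the
windows following the first position are not right-special, the agreement propagates. -/
lemma masterProp {X : Set (ℤ → A)} {x : ℤ → A} (hx : x ∈ X) (n : ℕ)
    (i i' : ℤ) (t : ℕ)
    (H0 : ∀ r : ℕ, r ≤ n → x (i + (r : ℤ)) = x (i' + (r : ℤ)))
    (HNS : ∀ s : ℕ, 1 ≤ s → s ≤ t → ¬ SpecW X (winW x (i + (s : ℤ)) n)) :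
    ∀ r : ℕ, r ≤ n + t → x (i + (r : ℤ)) = x (i' + (r : ℤ)) := by
  intro r
  induction r using Nat.strong_induction_on with
  | _ r IH =>
    intro hr
    by_cases hrn : r ≤ n
    · exact H0 r hrn
    · push_neg at hrn
      obtain ⟨s, rfl⟩ : ∃ s, r = n + s := ⟨r - n, by omega⟩
      have hs1 : 1 ≤ s := by omega
      have hst : s ≤ t := by omega
      have hwin : winW x (i + (s : ℤ)) n = winW x (i' + (s : ℤ)) n := by
        rw [winW_eq_iff]
        intro u
        have h1 := IH (s + (u : ℕ)) (by omega) (by omega)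
        have e1 : i + (s : ℤ) + ((u : ℕ) : ℤ) = i + ((s + (u : ℕ) : ℕ) : ℤ) := by push_cast; ring
        have e2 : i' + (s : ℤ) + ((u : ℕ) : ℤ) = i' + ((s + (u : ℕ) : ℕ) : ℤ) := by push_cast; ring
        rw [e1, e2]; exact h1
      have hmem : winW x (i + (s : ℤ)) n ++ [x (i + (s : ℤ) + (n : ℤ))] ∈ language X := by
        rw [← winW_succ]; exact winW_mem_language hx _ _
      have hmem' : winW x (i + (s : ℤ)) n ++ [x (i' + (s : ℤ) + (n : ℤ))] ∈ language X := by
        rw [hwin, ← winW_succ]; exact winW_mem_language hx _ _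
      have hletter := ext_unique (HNS s hs1 hst) hmem hmem'
      have e1 : i + ((n + s : ℕ) : ℤ) = i + (s : ℤ) + (n : ℤ) := by push_cast; ring
      have e2 : i' + ((n + s : ℕ) : ℤ) = i' + (s : ℤ) + (n : ℤ) := by push_cast; ring
      rw [e1, e2]; exact hletter

/-- Pigeonhole: two equal `n`-windows within any stretch of `c_n + 1` positions. -/
lemma exists_repeat [Finite A] {X : Set (ℤ → A)} {x : ℤ → A} (hx : x ∈ X)
    (n : ℕ) (i₀ : ℤ) :
    ∃ s₁ s₂ : ℕ, s₁ < s₂ ∧ s₂ ≤ complexity X n ∧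
      winW x (i₀ + (s₁ : ℤ)) n = winW x (i₀ + (s₂ : ℤ)) n := by
  classical
  set c := complexity X n with hc
  haveI := finite_words X n
  haveI : Fintype {w : List A // w.length = n ∧ w ∈ language X} := Fintype.ofFinite _
  have hcard : Fintype.card {w : List A // w.length = n ∧ w ∈ language X} = c := by
    rw [hc, complexity, Nat.card_eq_fintype_card]
  let f : Fin (c + 1) → {w : List A // w.length = n ∧ w ∈ language X} :=
    fun s => ⟨winW x (i₀ + ((s : ℕ) : ℤ)) n, winW_length .., winW_mem_language hx _ _⟩
  have hlt : Fintype.card {w : List A // w.length = n ∧ w ∈ language X} < Fintype.card (Fin (c + 1)) := by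
    simp [hcard]
  obtain ⟨s, s', hne, heq⟩ := Fintype.exists_ne_map_eq_of_card_lt f hlt
  rcases lt_or_gt_of_ne hne with h | h
  · exact ⟨s, s', h, by omega, congrArg Subtype.val heq⟩
  · exact ⟨s', s, h, by omega, (congrArg Subtype.val heq).symm⟩

lemma iterate_period {x : ℤ → A} {i₁ : ℤ} {p : ℕ}
    (hper : ∀ m : ℤ, i₁ ≤ m → x (m + (p : ℤ)) = x m) :
    ∀ (e : ℕ) (m : ℤ), i₁ ≤ m → x (m + (e * p : ℕ)) = x m := by
  intro e
  induction e with
  | zero => simp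
  | succ e IHe =>
    intro m hm
    have e1 : m + ((e + 1) * p : ℕ) = (m + (e * p : ℕ)) + (p : ℤ) := by push_cast; ring
    rw [e1, hper (m + (e * p : ℕ)) (le_trans hm (le_add_of_nonneg_right (by positivity)))]
    exact IHe m hm

end AuxSpec

section AuxFinite
variable {A : Type}

lemma shiftPerm_zpow_apply (A : Type) (k : ℤ) (x : ℤ → A) (m : ℤ) :
    ((shiftPerm A ^ k) x) m = x (m + k) := by
  induction k using Int.induction_on generalizing x with
  | zero => simp
  | succ i IH =>
    rw [zpow_add_one, Equiv.Perm.mul_apply]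
    have : ((shiftPerm A ^ (i : ℤ)) (shiftPerm A x)) m = (shiftPerm A x) (m + i) := IH _
    rw [this]
    show x (m + i + 1) = x (m + (i + 1))
    ring_nf
  | pred i IH =>
    rw [zpow_sub_one, Equiv.Perm.mul_apply]
    have : ((shiftPerm A ^ (-i : ℤ)) ((shiftPerm A)⁻¹ x)) m = ((shiftPerm A)⁻¹ x) (m + (-i)) := IH _
    rw [this]
    show x (m + -i - 1) = x (m + (-i - 1))
    ring_nf

/-- If no word of length `n` in the language is right-special, then `X` is finite. -/
lemma finite_of_no_special [Finite A] {X : Set (ℤ → A)}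
    (n : ℕ)
    (hnospec : ∀ w ∈ language X, w.length = n → ¬ SpecW X w) :
    X.Finite := by
  classical
  set c := complexity X n with hc
  set Q : ℕ := c.factorial with hQ
  have hQpos : 0 < Q := Nat.factorial_pos c
  have hper : ∀ x, x ∈ X → ∀ m : ℤ, x (m + (Q : ℤ)) = x m := by
    intro x hx m
    obtain ⟨s₁, s₂, hlt, hle, hw⟩ := exists_repeat hx n (m - (c : ℤ))
    set i₁ : ℤ := m - (c : ℤ) + (s₁ : ℤ) with hi₁
    set i₂ : ℤ := m - (c : ℤ) + (s₂ : ℤ) with hi₂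
    set p : ℕ := s₂ - s₁ with hp
    have hp1 : 1 ≤ p := by omega
    have hpc : p ≤ c := by omega
    have H0 : ∀ r : ℕ, r ≤ n → x (i₁ + (r : ℤ)) = x (i₂ + (r : ℤ)) := by
      intro r hr
      rcases eq_or_lt_of_le hr with heq | hltr
      · subst heq
        have hmem : winW x i₁ r ++ [x (i₁ + (r : ℤ))] ∈ language X := by
          rw [← winW_succ]; exact winW_mem_language hx _ _
        have hmem' : winW x i₁ r ++ [x (i₂ + (r : ℤ))] ∈ language X := by
          rw [hw, ← winW_succ]; exact winW_mem_language hx _ _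
        exact ext_unique (hnospec _ (winW_mem_language hx _ _) (winW_length ..)) hmem hmem'
      · exact winW_eq_iff.mp hw ⟨r, hltr⟩
    have HNS : ∀ s : ℕ, 1 ≤ s → s ≤ Q + c → ¬ SpecW X (winW x (i₁ + (s : ℤ)) n) :=
      fun s _ _ => hnospec _ (winW_mem_language hx _ _) (winW_length ..)
    have hMP := masterProp hx n i₁ i₂ (Q + c) H0 HNS
    have hper1 : ∀ m' : ℤ, i₁ ≤ m' → m' ≤ m + (Q : ℤ) → x (m' + (p : ℤ)) = x m' := by
      intro m' h1 h2
      have hr := hMP (m' - i₁).toNat (by omega)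
      have e1 : i₁ + ((m' - i₁).toNat : ℤ) = m' := by omega
      have e2 : i₂ + ((m' - i₁).toNat : ℤ) = m' + (p : ℤ) := by omega
      rw [e1, e2] at hr
      exact hr.symm
    have key : ∀ (e : ℕ), e * p ≤ Q → x (m + ((e * p : ℕ) : ℤ)) = x m := by
      intro e
      induction e with
      | zero => simp
      | succ e IHe =>
        intro hle2
        have e1 : m + (((e + 1) * p : ℕ) : ℤ) = (m + ((e * p : ℕ) : ℤ)) + (p : ℤ) := by
          push_cast; ring
        have hep : e * p ≤ Q := by nlinarith
        have hb1 : i₁ ≤ m + ((e * p : ℕ) : ℤ) := by omega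
        have hb2 : m + ((e * p : ℕ) : ℤ) ≤ m + (Q : ℤ) := by omega
        rw [e1, hper1 (m + ((e * p : ℕ) : ℤ)) hb1 hb2]
        exact IHe hep
    have hdvd : p ∣ Q := Nat.dvd_factorial hp1 hpc
    have := key (Q / p) (by rw [Nat.div_mul_cancel hdvd])
    rwa [Nat.div_mul_cancel hdvd] at this
  -- every point of X is Q-periodic; inject X into Fin Q → A
  have hperiodic : ∀ x, x ∈ X → ∀ (g : ℤ) (r : ℤ), x (r + g * (Q : ℤ)) = x r := by
    intro x hx g
    induction g using Int.induction_on with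
    | zero => simp
    | succ i IH =>
      intro r
      have e1 : r + ((i : ℤ) + 1) * (Q : ℤ) = (r + i * (Q : ℤ)) + (Q : ℤ) := by ring
      rw [e1, hper x hx, IH]
    | pred i IH =>
      intro r
      have e2 := hper x hx (r + (-(i : ℤ) - 1) * (Q : ℤ))
      have e1 : r + (-(i : ℤ) - 1) * (Q : ℤ) + (Q : ℤ) = r + (-(i : ℤ)) * (Q : ℤ) := by ring
      rw [e1] at e2
      rw [← e2]
      exact IH r
  have hinj : Function.Injective (fun (x : ↥X) => (fun i : Fin Q => x.1 ((i : ℕ) : ℤ))) := by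
    intro x y h
    apply Subtype.ext
    funext m
    have hm1 : 0 ≤ m % (Q : ℤ) := Int.emod_nonneg m (by exact_mod_cast hQpos.ne')
    have hm2 : m % (Q : ℤ) < Q := Int.emod_lt_of_pos m (by exact_mod_cast hQpos)
    have hrep : m = m % (Q : ℤ) + (m / (Q : ℤ)) * (Q : ℤ) := by
      rw [mul_comm]
      exact (Int.emod_add_mul_ediv m (Q : ℤ)).symm
    have h1 : x.1 m = x.1 (m % (Q : ℤ)) := by
      conv_lhs => rw [hrep]
      exact hperiodic x.1 x.2 (m / (Q : ℤ)) (m % (Q : ℤ))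
    have h2 : y.1 m = y.1 (m % (Q : ℤ)) := by
      conv_lhs => rw [hrep]
      exact hperiodic y.1 y.2 (m / (Q : ℤ)) (m % (Q : ℤ))
    have h3 := congrFun h ⟨(m % (Q : ℤ)).toNat, by omega⟩
    simp only at h3
    rw [h1, h2]
    have e : (((m % (Q : ℤ)).toNat : ℕ) : ℤ) = m % (Q : ℤ) := by omega
    rw [← e]
    exact h3
  haveI : Finite ↥X := Finite.of_injective _ hinj
  exact X.toFinite

end AuxFinite

section AuxCount
variable {A : Type}

lemma word_extend {X : Set (ℤ → A)} {w : List A} (hw : w ∈ language X) :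
    ∃ a : A, w ++ [a] ∈ language X := by
  obtain ⟨x, hx, i, hwin⟩ := mem_language_iff_winW.mp hw
  refine ⟨x (i + (w.length : ℤ)), ?_⟩
  have h2 := winW_mem_language hx i (w.length + 1)
  rw [winW_succ, hwin] at h2
  exact h2

lemma card_special_le [Finite A] (X : Set (ℤ → A)) (n : ℕ) :
    complexity X n + Nat.card {w : List A // w.length = n ∧ w ∈ language X ∧ SpecW X w}
      ≤ complexity X (n + 1) := by
  classical
  haveI hfin : Finite {w : List A // w.length = n ∧ w ∈ language X} := finite_words X n
  haveI hfin1 : Finite {w : List A // w.length = n + 1 ∧ w ∈ language X} := finite_words X (n + 1)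
  haveI hfinS : Finite {w : List A // w.length = n ∧ w ∈ language X ∧ SpecW X w} := by
    have : Function.Injective
        (fun w : {w : List A // w.length = n ∧ w ∈ language X ∧ SpecW X w} =>
          (⟨w.1, w.2.1, w.2.2.1⟩ : {w : List A // w.length = n ∧ w ∈ language X})) := by
      intro a b h
      have h' := congrArg Subtype.val h
      exact Subtype.ext h' 
    exact Finite.of_injective _ this
  -- choice of a right extension for every word of length n
  have he1 : ∀ w : {w : List A // w.length = n ∧ w ∈ language X},
      ∃ a : A, w.1 ++ [a] ∈ language X := fun w => word_extend w.2.2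
  choose e1 he1spec using he1
  have he2 : ∀ w : {w : List A // w.length = n ∧ w ∈ language X ∧ SpecW X w},
      ∃ a : A, w.1 ++ [a] ∈ language X ∧ a ≠ e1 ⟨w.1, w.2.1, w.2.2.1⟩ := by
    intro w
    obtain ⟨a, b, hab, ha, hb⟩ := w.2.2.2
    by_cases hae : a = e1 ⟨w.1, w.2.1, w.2.2.1⟩
    · exact ⟨b, hb, fun hbe => hab (hae.trans hbe.symm)⟩
    · exact ⟨a, ha, hae⟩
  choose e2 he2spec using he2
  set f : {w : List A // w.length = n ∧ w ∈ language X} ⊕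
      {w : List A // w.length = n ∧ w ∈ language X ∧ SpecW X w} →
      {w : List A // w.length = n + 1 ∧ w ∈ language X} :=
    fun z => match z with
      | Sum.inl w => ⟨w.1 ++ [e1 w], by simp [w.2.1], he1spec w⟩
      | Sum.inr w => ⟨w.1 ++ [e2 w], by simp [w.2.1], (he2spec w).1⟩ with hf
  have hinj : Function.Injective f := by
    intro z z' h
    have hval := congrArg Subtype.val h
    match z, z' with
    | Sum.inl w, Sum.inl w' =>
      simp only [hf] at hval
      obtain ⟨h1, h2⟩ := List.append_inj hval (by rw [w.2.1, w'.2.1])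
      exact congrArg Sum.inl (Subtype.ext h1)
    | Sum.inl w, Sum.inr w' =>
      exfalso
      simp only [hf] at hval
      obtain ⟨h1, h2⟩ := List.append_inj hval (by rw [w.2.1, w'.2.1])
      have hww' : w = ⟨w'.1, w'.2.1, w'.2.2.1⟩ := Subtype.ext h1
      have : e1 w = e2 w' := by
        have := List.head_eq_of_cons_eq h2; exact this
      rw [hww'] at this
      exact (he2spec w').2 this.symm
    | Sum.inr w, Sum.inl w' =>
      exfalso
      simp only [hf] at hval
      obtain ⟨h1, h2⟩ := List.append_inj hval (by rw [w.2.1, w'.2.1])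
      have hww' : w' = ⟨w.1, w.2.1, w.2.2.1⟩ := Subtype.ext h1.symm
      have : e2 w = e1 w' := by
        have := List.head_eq_of_cons_eq h2; exact this
      rw [hww'] at this
      exact (he2spec w).2 this
    | Sum.inr w, Sum.inr w' =>
      simp only [hf] at hval
      obtain ⟨h1, h2⟩ := List.append_inj hval (by rw [w.2.1, w'.2.1])
      exact congrArg Sum.inr (Subtype.ext h1)
  calc complexity X n + Nat.card {w : List A // w.length = n ∧ w ∈ language X ∧ SpecW X w}
      = Nat.card ({w : List A // w.length = n ∧ w ∈ language X} ⊕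
        {w : List A // w.length = n ∧ w ∈ language X ∧ SpecW X w}) := (Nat.card_sum).symm
    _ ≤ Nat.card {w : List A // w.length = n + 1 ∧ w ∈ language X} :=
        Nat.card_le_card_of_injective f hinj
    _ = complexity X (n + 1) := rfl

end AuxCount

section AuxTop
variable {A : Type} [TopologicalSpace A] [DiscreteTopology A]

lemma occurs_in_transitive {X : Set (ℤ → A)} {x : ℤ → A}
    (hcl : closure {y : ℤ → A | ∃ k : ℤ, (shiftPerm A ^ k) x = y} = X)
    {w : List A} (hw : w ∈ language X) : ∃ k : ℤ, winW x k w.length = w := by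
  obtain ⟨x₁, hx₁, i, hwin⟩ := mem_language_iff_winW.mp hw
  set U := {y : ℤ → A | ∀ j : Fin w.length, y (i + ((j : ℕ) : ℤ)) = x₁ (i + ((j : ℕ) : ℤ))} with hU
  have hUopen : IsOpen U := by
    have : U = ⋂ j : Fin w.length,
        {y : ℤ → A | y (i + ((j : ℕ) : ℤ)) = x₁ (i + ((j : ℕ) : ℤ))} := by
      ext y; simp [hU, Set.mem_iInter]
    rw [this]
    refine isOpen_iInter_of_finite fun j => ?_
    have hc : Continuous (fun y : ℤ → A => y (i + ((j : ℕ) : ℤ))) := continuous_apply _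
    have := hc.isOpen_preimage ({x₁ (i + ((j : ℕ) : ℤ))} : Set A) (isOpen_discrete _)
    convert this using 1
    rfl
  have hx₁U : x₁ ∈ U := fun j => rfl
  have hx₁cl : x₁ ∈ closure {y : ℤ → A | ∃ k : ℤ, (shiftPerm A ^ k) x = y} := by
    rw [hcl]; exact hx₁
  obtain ⟨y, hyU, k, hky⟩ := mem_closure_iff.mp hx₁cl U hUopen hx₁U
  refine ⟨i + k, ?_⟩
  have key : winW x (i + k) w.length = winW x₁ i w.length := by
    rw [winW_eq_iff]
    intro t
    have h1 := hyU t
    rw [← hky] at h1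
    rw [shiftPerm_zpow_apply] at h1
    have e : i + ((t : ℕ) : ℤ) + k = i + k + ((t : ℕ) : ℤ) := by ring
    rw [e] at h1
    exact h1
  exact key.trans hwin

lemma shiftRestrict_zpow_val {X : Set (ℤ → A)} (hX : IsSubshift X) (k : ℤ) (pt : ↥X) :
    (((shiftRestrict hX) ^ k) pt : ℤ → A) = (shiftPerm A ^ k) (pt : ℤ → A) := by
  induction k using Int.induction_on generalizing pt with
  | zero => simp
  | succ i IH =>
    rw [zpow_add_one, zpow_add_one, Equiv.Perm.mul_apply, Equiv.Perm.mul_apply]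
    rw [IH (shiftRestrict hX pt)]
    rfl
  | pred i IH =>
    rw [zpow_sub_one, zpow_sub_one, Equiv.Perm.mul_apply, Equiv.Perm.mul_apply]
    rw [IH ((shiftRestrict hX)⁻¹ pt)]
    rfl

lemma aut_determined {X : Set (ℤ → A)} (hX : IsSubshift X) {x : ℤ → A} (hx : x ∈ X)
    (hcl : closure {y : ℤ → A | ∃ k : ℤ, (shiftPerm A ^ k) x = y} = X)
    (φ ψ : ↥(Aut hX)) (h : (φ : Equiv.Perm ↥X) ⟨x, hx⟩ = (ψ : Equiv.Perm ↥X) ⟨x, hx⟩) :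
    φ = ψ := by
  obtain ⟨hφc, hφc', hφR⟩ := φ.2
  obtain ⟨hψc, hψc', hψR⟩ := ψ.2
  set x₀ : ↥X := ⟨x, hx⟩ with hx₀
  set O : Set ↥X := Set.range (fun k : ℤ => ((shiftRestrict hX) ^ k) x₀) with hO
  have hdense : Dense O := by
    intro pt
    rw [mem_closure_iff]
    intro o ho hpt
    -- use the ambient density
    obtain ⟨o', ho', ho'eq⟩ := isOpen_induced_iff.mp ho
    have hptcl : (pt : ℤ → A) ∈ closure {y : ℤ → A | ∃ k : ℤ, (shiftPerm A ^ k) x = y} := by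
      rw [hcl]; exact pt.2
    have hpto' : (pt : ℤ → A) ∈ o' := by
      rw [← ho'eq] at hpt; exact hpt
    obtain ⟨y, hyo', k, hky⟩ := mem_closure_iff.mp hptcl o' ho' hpto'
    refine ⟨((shiftRestrict hX) ^ k) x₀, ?_, ⟨k, rfl⟩⟩
    rw [← ho'eq]
    show (((shiftRestrict hX) ^ k) x₀ : ℤ → A) ∈ o'
    rw [shiftRestrict_zpow_val]
    show (shiftPerm A ^ k) (x₀ : ℤ → A) ∈ o'
    rw [hx₀]
    rw [hky]
    exact hyo'
  have hcomm : Commute (φ : Equiv.Perm ↥X) (shiftRestrict hX) := by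
    apply Equiv.ext
    intro pt
    simpa [Equiv.Perm.mul_apply] using hφR pt
  have hcomm' : Commute (ψ : Equiv.Perm ↥X) (shiftRestrict hX) := by
    apply Equiv.ext
    intro pt
    simpa [Equiv.Perm.mul_apply] using hψR pt
  have hEq : Set.EqOn (⇑(φ : Equiv.Perm ↥X)) (⇑(ψ : Equiv.Perm ↥X)) O := by
    rintro pt ⟨k, rfl⟩
    have h1 : (φ : Equiv.Perm ↥X) * (shiftRestrict hX) ^ k
        = (shiftRestrict hX) ^ k * (φ : Equiv.Perm ↥X) := hcomm.zpow_right k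
    have h2 : (ψ : Equiv.Perm ↥X) * (shiftRestrict hX) ^ k
        = (shiftRestrict hX) ^ k * (ψ : Equiv.Perm ↥X) := hcomm'.zpow_right k
    calc (φ : Equiv.Perm ↥X) (((shiftRestrict hX) ^ k) x₀)
        = ((φ : Equiv.Perm ↥X) * (shiftRestrict hX) ^ k) x₀ := rfl
      _ = ((shiftRestrict hX) ^ k * (φ : Equiv.Perm ↥X)) x₀ := by rw [h1]
      _ = ((shiftRestrict hX) ^ k) ((φ : Equiv.Perm ↥X) x₀) := rfl
      _ = ((shiftRestrict hX) ^ k) ((ψ : Equiv.Perm ↥X) x₀) := by rw [h]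
      _ = ((shiftRestrict hX) ^ k * (ψ : Equiv.Perm ↥X)) x₀ := rfl
      _ = ((ψ : Equiv.Perm ↥X) * (shiftRestrict hX) ^ k) x₀ := by rw [h2]
      _ = (ψ : Equiv.Perm ↥X) (((shiftRestrict hX) ^ k) x₀) := rfl
  have hfun : ⇑(φ : Equiv.Perm ↥X) = ⇑(ψ : Equiv.Perm ↥X) :=
    Continuous.ext_on hdense hφc hψc hEq
  have : (φ : Equiv.Perm ↥X) = (ψ : Equiv.Perm ↥X) := Equiv.coe_fn_injective hfun
  exact Subtype.ext this

end AuxTop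

section AuxCover
variable {A : Type} [TopologicalSpace A] [DiscreteTopology A] [Finite A]

lemma covering {X : Set (ℤ → A)} (hinf : X.Infinite)
    {x : ℤ → A} (hx : x ∈ X)
    (hcl : closure {y : ℤ → A | ∃ k : ℤ, (shiftPerm A ^ k) x = y} = X)
    (n l : ℕ) (hln : l ≤ n)
    (K : {w : List A // w.length = n ∧ w ∈ language X ∧ SpecW X w} × A → ℤ)
    (hK : ∀ p : {w : List A // w.length = n ∧ w ∈ language X ∧ SpecW X w} × A,
      (∃ k : ℤ, winW x k n = p.1.1 ∧ x (k + (n : ℤ)) = p.2) →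
      winW x (K p) n = p.1.1 ∧ x (K p + (n : ℤ)) = p.2)
    (j : ℤ) :
    ∃ p δ, (δ : ℕ) ≤ complexity X n ∧ winW x j l = winW x (K p + ((δ : ℕ) : ℤ)) l := by
  classical
  set c := complexity X n with hc
  by_cases hE : ∃ k : ℤ, k ≤ j ∧ SpecW X (winW x k n)
  · obtain ⟨ks, ⟨hksj, hksS⟩, hmax⟩ :=
      Int.exists_greatest_of_bdd (P := fun k => k ≤ j ∧ SpecW X (winW x k n))
        ⟨j, fun z hz => hz.1⟩ hE
    have key : ∀ D : ℕ, ∀ j' : ℤ, j' = ks + (D : ℤ) →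
        (∀ i : ℤ, ks < i → i ≤ j' → ¬ SpecW X (winW x i n)) →
        ∃ p δ, (δ : ℕ) ≤ c ∧ winW x j' l = winW x (K p + ((δ : ℕ) : ℤ)) l := by
      intro D
      induction D using Nat.strong_induction_on with
      | _ D IH =>
        intro j' hj' hns
        by_cases hDc : D ≤ c
        · -- Case 1: use the slot anchored at the special word at ks
          refine ⟨(⟨winW x ks n, winW_length .., winW_mem_language hx _ _, hksS⟩,
              x (ks + (n : ℤ))), D, hDc, ?_⟩
          set p : {w : List A // w.length = n ∧ w ∈ language X ∧ SpecW X w} × A :=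
            (⟨winW x ks n, winW_length .., winW_mem_language hx _ _, hksS⟩,
              x (ks + (n : ℤ))) with hp
          obtain ⟨hKw, hKa⟩ := hK p ⟨ks, rfl, rfl⟩
          have H0 : ∀ r : ℕ, r ≤ n → x (ks + (r : ℤ)) = x (K p + (r : ℤ)) := by
            intro r hr
            rcases eq_or_lt_of_le hr with heq | hlt
            · subst heq
              exact hKa.symm
            · exact (winW_eq_iff.mp (show winW x (K p) n = winW x ks n from hKw) ⟨r, hlt⟩).symm
          have HNS : ∀ s : ℕ, 1 ≤ s → s ≤ D → ¬ SpecW X (winW x (ks + (s : ℤ)) n) := by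
            intro s h1 h2
            exact hns (ks + (s : ℤ)) (by omega) (by omega)
          have hMP := masterProp hx n ks (K p) D H0 HNS
          rw [winW_eq_iff]
          intro t
          have htl : (t : ℕ) < l := t.2
          have hb : (D + (t : ℕ)) ≤ n + D := by omega
          have h1 := hMP (D + (t : ℕ)) hb
          have e1 : j' + ((t : ℕ) : ℤ) = ks + ((D + (t : ℕ) : ℕ) : ℤ) := by push_cast; omega
          have e2 : K p + ((D : ℕ) : ℤ) + ((t : ℕ) : ℤ) = K p + ((D + (t : ℕ) : ℕ) : ℤ) := by
            push_cast; ring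
          rw [e1, e2]
          exact h1
        · -- Case 2: no special nearby; periodicity pulls the window left
          push_neg at hDc
          obtain ⟨s₁, s₂, hs12, hs2c, hww⟩ := exists_repeat hx n (j' - (c : ℤ))
          set i₁ : ℤ := j' - (c : ℤ) + (s₁ : ℤ) with hi₁
          set i₂ : ℤ := j' - (c : ℤ) + (s₂ : ℤ) with hi₂
          set pp : ℕ := s₂ - s₁ with hpp
          have hpp1 : 1 ≤ pp := by omega
          have hppc : pp ≤ c := by omega
          have hi₁k : ks < i₁ := by omega
          have hi₁j : i₁ ≤ j' := by omega
          have H0 : ∀ r : ℕ, r ≤ n → x (i₁ + (r : ℤ)) = x (i₂ + (r : ℤ)) := by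
            intro r hr
            rcases eq_or_lt_of_le hr with heq | hltr
            · subst heq
              have hmem : winW x i₁ r ++ [x (i₁ + (r : ℤ))] ∈ language X := by
                rw [← winW_succ]; exact winW_mem_language hx _ _
              have hmem' : winW x i₁ r ++ [x (i₂ + (r : ℤ))] ∈ language X := by
                rw [hww, ← winW_succ]; exact winW_mem_language hx _ _
              exact ext_unique (hns i₁ hi₁k hi₁j) hmem hmem'
            · exact winW_eq_iff.mp hww ⟨r, hltr⟩
          have HNS : ∀ s : ℕ, 1 ≤ s → s ≤ c - s₂ → ¬ SpecW X (winW x (i₁ + (s : ℤ)) n) := by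
            intro s h1 h2
            exact hns (i₁ + (s : ℤ)) (by omega) (by omega)
          have hMP := masterProp hx n i₁ i₂ (c - s₂) H0 HNS
          have hwin2 : winW x (j' - (pp : ℤ)) l = winW x j' l := by
            rw [winW_eq_iff]
            intro t
            have htl : (t : ℕ) < l := t.2
            have h1 := hMP ((c - s₂) + (t : ℕ)) (by omega)
            have e1 : j' - (pp : ℤ) + ((t : ℕ) : ℤ) = i₁ + (((c - s₂) + (t : ℕ) : ℕ) : ℤ) := by
              push_cast; omega
            have e2 : j' + ((t : ℕ) : ℤ) = i₂ + (((c - s₂) + (t : ℕ) : ℕ) : ℤ) := by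
              push_cast; omega
            rw [e1, e2]
            exact h1
          obtain ⟨p, δ, hδ, hcov⟩ := IH (D - pp) (by omega) (j' - (pp : ℤ))
            (by push_cast; omega) (fun i h1 h2 => hns i h1 (by omega))
          exact ⟨p, δ, hδ, hwin2.symm.trans hcov⟩
    exact key (j - ks).toNat j (by omega)
      (fun i h1 h2 hS => absurd (hmax i ⟨h2, hS⟩) (not_le.mpr h1))
  · -- Case 3: no special at all to the left of j: contradiction with infiniteness
    push_neg at hE
    exfalso
    obtain ⟨s₁, s₂, hs12, hs2c, hww⟩ := exists_repeat hx n (j - (c : ℤ))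
    set i₁ : ℤ := j - (c : ℤ) + (s₁ : ℤ) with hi₁
    set i₂ : ℤ := j - (c : ℤ) + (s₂ : ℤ) with hi₂
    set pp : ℕ := s₂ - s₁ with hpp
    have hpp1 : 1 ≤ pp := by omega
    have hppc : pp ≤ c := by omega
    have hi₁j : i₁ + (pp : ℤ) ≤ j := by omega
    have H0 : ∀ r : ℕ, r ≤ n → x (i₁ + (r : ℤ)) = x (i₂ + (r : ℤ)) := by
      intro r hr
      rcases eq_or_lt_of_le hr with heq | hltr
      · subst heq
        have hmem : winW x i₁ r ++ [x (i₁ + (r : ℤ))] ∈ language X := by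
          rw [← winW_succ]; exact winW_mem_language hx _ _
        have hmem' : winW x i₁ r ++ [x (i₂ + (r : ℤ))] ∈ language X := by
          rw [hww, ← winW_succ]; exact winW_mem_language hx _ _
        exact ext_unique (hE i₁ (by omega)) hmem hmem'
      · exact winW_eq_iff.mp hww ⟨r, hltr⟩
    have HNS : ∀ s : ℕ, 1 ≤ s → s ≤ c - s₂ → ¬ SpecW X (winW x (i₁ + (s : ℤ)) n) := by
      intro s h1 h2
      exact hE (i₁ + (s : ℤ)) (by omega)
    have hMP := masterProp hx n i₁ i₂ (c - s₂) H0 HNS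
    have hagree : ∀ m : ℤ, i₁ ≤ m → m + (pp : ℤ) ≤ j + (n : ℤ) → x (m + (pp : ℤ)) = x m := by
      intro m h1 h2
      have hr := hMP (m - i₁).toNat (by omega)
      have e1 : i₁ + ((m - i₁).toNat : ℤ) = m := by omega
      have e2 : i₂ + ((m - i₁).toNat : ℤ) = m + (pp : ℤ) := by omega
      rw [e1, e2] at hr
      exact hr.symm
    by_cases hB : ∃ m : ℤ, i₁ ≤ m ∧ x (m + (pp : ℤ)) ≠ x m
    · obtain ⟨M, ⟨hMi, hMne⟩, hMmin⟩ :=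
        Int.exists_least_of_bdd (P := fun m => i₁ ≤ m ∧ x (m + (pp : ℤ)) ≠ x m)
          ⟨i₁, fun z hz => hz.1⟩ hB
      have hMlow : ∀ m : ℤ, i₁ ≤ m → m < M → x (m + (pp : ℤ)) = x m := by
        intro m h1 h2
        by_contra hne
        exact absurd (hMmin m ⟨h1, hne⟩) (not_le.mpr h2)
      have hMbig : j + (n : ℤ) - (pp : ℤ) < M := by
        by_contra hcon
        push_neg at hcon
        exact hMne (hagree M hMi (by omega))
      have hex : ∃ t : ℕ, M - (n : ℤ) - (t : ℤ) * (pp : ℤ) ≤ j := by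
        refine ⟨(M - (n : ℤ) - j).toNat, ?_⟩
        have h1 : ((M - (n : ℤ) - j).toNat : ℤ) ≤ ((M - (n : ℤ) - j).toNat : ℤ) * (pp : ℤ) := by
          exact le_mul_of_one_le_right (by positivity) (by exact_mod_cast hpp1)
        omega
      have ht₀ : M - (n : ℤ) - ((Nat.find hex : ℕ) : ℤ) * (pp : ℤ) ≤ j := Nat.find_spec hex
      set t₀ := Nat.find hex with ht₀def
      set T : ℤ := ((t₀ : ℕ) : ℤ) * (pp : ℤ) with hT
      have hTnn : 0 ≤ T := by positivity
      have hposgt : j - (pp : ℤ) < M - (n : ℤ) - T := by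
        rcases Nat.eq_zero_or_pos t₀ with h0 | hpos
        · have : T = 0 := by rw [hT, h0]; simp
          omega
        · have hfm := Nat.find_min hex (show t₀ - 1 < t₀ by omega)
          push_neg at hfm
          have e : ((t₀ - 1 : ℕ) : ℤ) * (pp : ℤ) = T - (pp : ℤ) := by
            rw [Nat.cast_sub hpos, hT]; ring
          omega
      have hiter : ∀ (u : ℕ) (m : ℤ), i₁ ≤ m → m + (u : ℤ) * (pp : ℤ) < M →
          x (m + (u : ℤ) * (pp : ℤ)) = x m := by
        intro u
        induction u with
        | zero => intro m _ _; simp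
        | succ u IHu =>
          intro m h1 h2
          set U : ℤ := (u : ℤ) * (pp : ℤ) with hU
          have hUnn : 0 ≤ U := by positivity
          have e1 : ((u + 1 : ℕ) : ℤ) * (pp : ℤ) = U + (pp : ℤ) := by
            rw [hU]; push_cast; ring
          rw [e1] at h2 ⊢
          rw [show m + (U + (pp : ℤ)) = (m + U) + (pp : ℤ) by ring]
          rw [hMlow (m + U) (by omega) (by omega)]
          exact IHu m h1 (by omega)
      have hw1 : winW x (M - (n : ℤ) - T) n = winW x (M - (n : ℤ)) n := by
        rw [winW_eq_iff]
        intro t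
        have htn : (t : ℕ) < n := t.2
        have h1 := hiter t₀ (M - (n : ℤ) - T + ((t : ℕ) : ℤ)) (by omega) (by rw [← hT]; omega)
        rw [← hT] at h1
        rw [show M - (n : ℤ) - T + ((t : ℕ) : ℤ) + T = M - (n : ℤ) + ((t : ℕ) : ℤ) by ring] at h1
        exact h1.symm
      have hw2 : winW x (M - (n : ℤ) + (pp : ℤ)) n = winW x (M - (n : ℤ)) n := by
        rw [winW_eq_iff]
        intro t
        have htn : (t : ℕ) < n := t.2
        have h1 := hMlow (M - (n : ℤ) + ((t : ℕ) : ℤ)) (by omega) (by omega)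
        rw [show M - (n : ℤ) + (pp : ℤ) + ((t : ℕ) : ℤ)
            = M - (n : ℤ) + ((t : ℕ) : ℤ) + (pp : ℤ) by ring]
        exact h1
      have hm1 : winW x (M - (n : ℤ)) n ++ [x M] ∈ language X := by
        have h1 := winW_mem_language hx (M - (n : ℤ)) (n + 1)
        rw [winW_succ, show M - (n : ℤ) + (n : ℤ) = M by ring] at h1
        exact h1
      have hm2 : winW x (M - (n : ℤ)) n ++ [x (M + (pp : ℤ))] ∈ language X := by
        have h1 := winW_mem_language hx (M - (n : ℤ) + (pp : ℤ)) (n + 1)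
        rw [winW_succ, hw2,
          show M - (n : ℤ) + (pp : ℤ) + (n : ℤ) = M + (pp : ℤ) by ring] at h1
        exact h1
      have hspec : SpecW X (winW x (M - (n : ℤ) - T) n) := by
        rw [hw1]
        exact ⟨x M, x (M + (pp : ℤ)), fun hcc => hMne (by rw [hcc]), hm1, hm2⟩
      exact hE (M - (n : ℤ) - T) (by omega) hspec
    · push_neg at hB
      have hnospec : ∀ w ∈ language X, w.length = n → ¬ SpecW X w := by
        intro w hw hlen hspec
        obtain ⟨k, hk⟩ := occurs_in_transitive hcl hw
        rw [hlen] at hk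
        rcases le_or_gt k j with hkj | hkj
        · exact hE k hkj (by rw [hk]; exact hspec)
        · have hex2 : ∃ t : ℕ, k - (t : ℤ) * (pp : ℤ) ≤ j := by
            refine ⟨(k - j).toNat, ?_⟩
            have h1 : ((k - j).toNat : ℤ) ≤ ((k - j).toNat : ℤ) * (pp : ℤ) :=
              le_mul_of_one_le_right (by positivity) (by exact_mod_cast hpp1)
            omega
          have ht₁ : k - ((Nat.find hex2 : ℕ) : ℤ) * (pp : ℤ) ≤ j := Nat.find_spec hex2
          set t₁ := Nat.find hex2 with ht₁def
          set T : ℤ := ((t₁ : ℕ) : ℤ) * (pp : ℤ) with hT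
          have hTnn : 0 ≤ T := by positivity
          have hposgt : j - (pp : ℤ) < k - T := by
            rcases Nat.eq_zero_or_pos t₁ with h0 | hpos
            · have : T = 0 := by rw [hT, h0]; simp
              omega
            · have hfm := Nat.find_min hex2 (show t₁ - 1 < t₁ by omega)
              push_neg at hfm
              have e : ((t₁ - 1 : ℕ) : ℤ) * (pp : ℤ) = T - (pp : ℤ) := by
                rw [Nat.cast_sub hpos, hT]; ring
              omega
          have hwq : winW x (k - T) n = winW x k n := by
            rw [winW_eq_iff]
            intro t
            have hit := iterate_period hB t₁ (k - T + ((t : ℕ) : ℤ)) (by omega)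
            have e : k - T + ((t : ℕ) : ℤ) + ((t₁ * pp : ℕ) : ℤ) = k + ((t : ℕ) : ℤ) := by
              push_cast
              rw [hT]
              push_cast
              ring
            rw [e] at hit
            exact hit.symm
          exact hE (k - T) (by omega) (by rw [hwq, hk]; exact hspec)
      exact hinf (finite_of_no_special n hnospec)

end AuxCover


/-- For an infinite transitive subshift, the number of automorphisms
of range `⌊(n-1)/2⌋` is at most `c_{1+c_n(X)}(X) ^ (2|A|(c_{n+1}(X) - c_n(X)))`. -/
theorem card_aut_range_le
    {A : Type} [Fintype A] [TopologicalSpace A] [DiscreteTopology A]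
    (X : Set (ℤ → A)) (hX : IsSubshift X) (hinf : X.Infinite) (htrans : IsTransitive X)
    (n : ℕ) (hn : 1 ≤ n) :
    Nat.card {φ : ↥(Aut hX) // HasRange (φ : Equiv.Perm ↥X) ((n - 1) / 2)} ≤
      complexity X (1 + complexity X n) ^
        (2 * Fintype.card A * (complexity X (n + 1) - complexity X n)) := by
  classical
  obtain ⟨x, hx, hcl⟩ := htrans
  set N : ℕ := (n - 1) / 2 with hN
  set l : ℕ := 2 * N + 1 with hl
  have hln : l ≤ n := by omega
  set c := complexity X n with hc
  set q : ℕ := 1 + c with hq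
  haveI hfq : Finite {w : List A // w.length = q ∧ w ∈ language X} := finite_words X q
  haveI hfn1 : Finite {w : List A // w.length = n + 1 ∧ w ∈ language X} := finite_words X (n + 1)
  haveI hfnn : Finite {w : List A // w.length = n ∧ w ∈ language X} := finite_words X n
  haveI hfS : Finite {w : List A // w.length = n ∧ w ∈ language X ∧ SpecW X w} := by
    have hinj : Function.Injective
        (fun w : {w : List A // w.length = n ∧ w ∈ language X ∧ SpecW X w} =>
          (⟨w.1, w.2.1, w.2.2.1⟩ : {w : List A // w.length = n ∧ w ∈ language X})) := by
      intro a b h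
      have h' := congrArg Subtype.val h
      exact Subtype.ext h'
    exact Finite.of_injective _ hinj
  have hKex : ∀ p : {w : List A // w.length = n ∧ w ∈ language X ∧ SpecW X w} × A,
      ∃ k : ℤ, ((∃ k', winW x k' n = p.1.1 ∧ x (k' + (n : ℤ)) = p.2) →
        (winW x k n = p.1.1 ∧ x (k + (n : ℤ)) = p.2)) := by
    intro p
    by_cases h : ∃ k', winW x k' n = p.1.1 ∧ x (k' + (n : ℤ)) = p.2
    · obtain ⟨k', hk'⟩ := h
      exact ⟨k', fun _ => hk'⟩
    · exact ⟨0, fun hh => absurd hh h⟩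
  choose K hK using hKex
  set F : {φ : ↥(Aut hX) // HasRange (φ : Equiv.Perm ↥X) N} →
      (({w : List A // w.length = n ∧ w ∈ language X ∧ SpecW X w} × A) →
        {w : List A // w.length = q ∧ w ∈ language X}) :=
    fun φ p => ⟨winW (((φ.1 : Equiv.Perm ↥X) ⟨x, hx⟩ : ↥X) : ℤ → A) (K p + (N : ℤ)) q,
      winW_length .., winW_mem_language ((φ.1 : Equiv.Perm ↥X) ⟨x, hx⟩).2 _ _⟩ with hF
  have hinj : Function.Injective F := by
    intro φ ψ hFeq
    obtain ⟨Φ, hΦ⟩ := φ.2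
    obtain ⟨Ψ, hΨ⟩ := ψ.2
    have hyz : (((φ.1 : Equiv.Perm ↥X) ⟨x, hx⟩ : ↥X) : ℤ → A)
        = (((ψ.1 : Equiv.Perm ↥X) ⟨x, hx⟩ : ↥X) : ℤ → A) := by
      funext m
      obtain ⟨p, δ, hδ, hcov⟩ := covering hinf hx hcl n l hln K hK (m - (N : ℤ))
      have htup : (fun r : Fin (2 * N + 1) => x ((m - (N : ℤ)) + ((r : ℕ) : ℤ))) =
          (fun r : Fin (2 * N + 1) => x ((K p + ((δ : ℕ) : ℤ)) + ((r : ℕ) : ℤ))) :=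
        funext (winW_eq_iff.mp hcov)
      have h1 : (((φ.1 : Equiv.Perm ↥X) ⟨x, hx⟩ : ↥X) : ℤ → A) m
          = (((φ.1 : Equiv.Perm ↥X) ⟨x, hx⟩ : ↥X) : ℤ → A) (K p + ((δ : ℕ) : ℤ) + (N : ℤ)) := by
        rw [hΦ ⟨x, hx⟩ m, hΦ ⟨x, hx⟩ (K p + ((δ : ℕ) : ℤ) + (N : ℤ))]
        congr 1
        rw [show K p + ((δ : ℕ) : ℤ) + (N : ℤ) - (N : ℤ) = K p + ((δ : ℕ) : ℤ) by ring]
        exact htup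
      have h2 : (((ψ.1 : Equiv.Perm ↥X) ⟨x, hx⟩ : ↥X) : ℤ → A) m
          = (((ψ.1 : Equiv.Perm ↥X) ⟨x, hx⟩ : ↥X) : ℤ → A) (K p + ((δ : ℕ) : ℤ) + (N : ℤ)) := by
        rw [hΨ ⟨x, hx⟩ m, hΨ ⟨x, hx⟩ (K p + ((δ : ℕ) : ℤ) + (N : ℤ))]
        congr 1
        rw [show K p + ((δ : ℕ) : ℤ) + (N : ℤ) - (N : ℤ) = K p + ((δ : ℕ) : ℤ) by ring]
        exact htup
      have h3 : (((φ.1 : Equiv.Perm ↥X) ⟨x, hx⟩ : ↥X) : ℤ → A) (K p + ((δ : ℕ) : ℤ) + (N : ℤ))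
          = (((ψ.1 : Equiv.Perm ↥X) ⟨x, hx⟩ : ↥X) : ℤ → A) (K p + ((δ : ℕ) : ℤ) + (N : ℤ)) := by
        have hval := congrArg Subtype.val (congrFun hFeq p)
        have h4 := winW_eq_iff.mp hval ⟨(δ : ℕ), by omega⟩
        rw [show K p + ((δ : ℕ) : ℤ) + (N : ℤ) = K p + (N : ℤ) + ((δ : ℕ) : ℤ) by ring]
        exact h4
      rw [h1, h3, ← h2]
    have hpt : (φ.1 : Equiv.Perm ↥X) ⟨x, hx⟩ = (ψ.1 : Equiv.Perm ↥X) ⟨x, hx⟩ :=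
      Subtype.ext hyz
    exact Subtype.ext (aut_determined hX hx hcl φ.1 ψ.1 hpt)
  have hineq := Nat.card_le_card_of_injective F hinj
  have hq1 : 1 ≤ complexity X q := by
    have hne : Nonempty {w : List A // w.length = q ∧ w ∈ language X} :=
      ⟨⟨winW x 0 q, winW_length .., winW_mem_language hx _ _⟩⟩
    exact Nat.one_le_iff_ne_zero.mpr (Nat.card_ne_zero.mpr ⟨hne, hfq⟩)
  have hRS : Nat.card {w : List A // w.length = n ∧ w ∈ language X ∧ SpecW X w}
      ≤ complexity X (n + 1) - c := by
    have := card_special_le X n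
    omega
  have hcard : Nat.card (({w : List A // w.length = n ∧ w ∈ language X ∧ SpecW X w} × A) →
      {w : List A // w.length = q ∧ w ∈ language X})
      = complexity X q ^
        (Nat.card {w : List A // w.length = n ∧ w ∈ language X ∧ SpecW X w} * Fintype.card A) := by
    rw [Nat.card_fun, Nat.card_prod, Nat.card_eq_fintype_card (α := A)]
    rfl
  have hexp : Nat.card {w : List A // w.length = n ∧ w ∈ language X ∧ SpecW X w} * Fintype.card A
      ≤ 2 * Fintype.card A * (complexity X (n + 1) - c) := by
    calc Nat.card {w : List A // w.length = n ∧ w ∈ language X ∧ SpecW X w} * Fintype.card A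
        ≤ (complexity X (n + 1) - c) * Fintype.card A := Nat.mul_le_mul_right _ hRS
      _ ≤ 2 * Fintype.card A * (complexity X (n + 1) - c) := by nlinarith
  calc Nat.card {φ : ↥(Aut hX) // HasRange (φ : Equiv.Perm ↥X) N}
      ≤ Nat.card (({w : List A // w.length = n ∧ w ∈ language X ∧ SpecW X w} × A) →
        {w : List A // w.length = q ∧ w ∈ language X}) := hineq
    _ = complexity X q ^
        (Nat.card {w : List A // w.length = n ∧ w ∈ language X ∧ SpecW X w} * Fintype.card A) :=
        hcard
    _ ≤ complexity X q ^ (2 * Fintype.card A * (complexity X (n + 1) - c)) :=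
        Nat.pow_le_pow_right hq1 hexp
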